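/- Let μ ∈ ℝ be non-integer with f = μ - ⌊μ⌋ and c = ⌈μ⌉ - μ. The variance of the Dalap distribution p(n|μ,γ) ∝ γ^{|n-μ|} on ℤ converges to 0 as γ → 0⁺ if c ≠ f, and converges to 1/4 if c = f. -/

import Mathlib

open Filter Topology

noncomputable def dalapPhi (f c γ : ℝ) : ℝ :=
  γ * (1 + γ) / (1 - γ) ^ 2 + (γ ^ c / (γ ^ f + γ ^ c)) * (1 + 2 * (γ / (1 - γ)))
    - (γ ^ c / (γ ^ f + γ ^ c) + (2 * (γ ^ c / (γ ^ f + γ ^ c)) - 1) * (γ / (1 - γ))) ^ 2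

lemma hasSum_sq_geom {r : ℝ} (hr : ‖r‖ < 1) :
    HasSum (fun n : ℕ => (n : ℝ) ^ 2 * r ^ n)
      (2 / (1 - r) ^ 3 - 3 / (1 - r) ^ 2 + 1 / (1 - r)) := by
  have h2 := hasSum_choose_mul_geometric_of_norm_lt_one 2 hr
  have h1 := hasSum_choose_mul_geometric_of_norm_lt_one 1 hr
  have h0 := hasSum_choose_mul_geometric_of_norm_lt_one 0 hr
  have H := ((h2.mul_left 2).sub (h1.mul_left 3)).add h0
  convert H using 1
  · rfl
  · funext n
    have h : 2 * ((n + 2).choose 2) = (n + 2) * (n + 1) := by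
      rw [Nat.choose_two_right]
      exact Nat.mul_div_cancel' (by simpa [mul_comm] using (Nat.even_mul_succ_self (n+1)).two_dvd)
    have hch : (((n + 2).choose 2 : ℕ) : ℝ) = ((n : ℝ) ^ 2 + 3 * n + 2) / 2 := by
      have := congrArg (fun k : ℕ => (k : ℝ)) h
      push_cast at this
      linarith
    have hch1 : (((n + 1).choose 1 : ℕ) : ℝ) = (n : ℝ) + 1 := by
      simp [Nat.choose_one_right]
    simp only [hch, hch1, Nat.choose_zero_right, Nat.add_zero]
    push_cast
    ring
  · norm_num
    ring

lemma hasSum_int_split {γ μ : ℝ} (m : ℤ) (hm1 : (m : ℝ) < μ) (hm2 : μ < m + 1)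
    (w : ℤ → ℝ) {Sp Sn : ℝ}
    (hp : HasSum (fun k : ℕ => γ ^ (((m : ℝ) + 1 - μ) + k) * w (m + 1 + k)) Sp)
    (hn : HasSum (fun k : ℕ => γ ^ ((μ - m) + k) * w (m - k)) Sn) :
    HasSum (fun n : ℤ => γ ^ |(n : ℝ) - μ| * w n) (Sp + Sn) := by
  have key : HasSum (fun j : ℤ => γ ^ |((j + (m + 1) : ℤ) : ℝ) - μ| * w (j + (m + 1)))
      (Sp + Sn) := by
    apply HasSum.of_nat_of_neg_add_one
    · convert hp using 1
      funext k
      have harg : ((k : ℤ) + (m + 1)) = m + 1 + k := by ring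
      rw [harg]
      have habs : |((m + 1 + (k : ℤ) : ℤ) : ℝ) - μ| = ((m : ℝ) + 1 - μ) + k := by
        rw [abs_of_nonneg (by push_cast; linarith [Nat.cast_nonneg (α := ℝ) k])]
        push_cast; ring
      rw [habs]
    · convert hn using 1
      funext k
      have harg : (-((k : ℤ) + 1) + (m + 1)) = m - k := by ring
      rw [harg]
      have habs : |((m - (k : ℤ) : ℤ) : ℝ) - μ| = (μ - m) + k := by
        rw [abs_of_nonpos (by push_cast; linarith [Nat.cast_nonneg (α := ℝ) k])]
        push_cast; ring
      rw [habs]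
  exact ((Equiv.addRight ((m : ℤ) + 1)).hasSum_iff).mp key

lemma hasSum_shift {γ : ℝ} (hγ0 : 0 < γ) (e : ℝ) {g : ℕ → ℝ} {S : ℝ}
    (h : HasSum (fun k : ℕ => γ ^ k * g k) S) :
    HasSum (fun k : ℕ => γ ^ (e + (k : ℝ)) * g k) (γ ^ e * S) := by
  convert h.mul_left (γ ^ e) using 1
  · rfl
  funext k
  rw [Real.rpow_add hγ0, Real.rpow_natCast]
  ring

set_option maxHeartbeats 1000000 in
lemma dalap_variance_eq (μ : ℝ) (hμ : ∀ m : ℤ, (m : ℝ) ≠ μ)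
    (f c : ℝ) (hf : f = μ - ⌊μ⌋) (hc : c = (⌊μ⌋ : ℝ) + 1 - μ)
    (γ : ℝ) (hγ0 : 0 < γ) (hγ1 : γ < 1) :
    (∑' n : ℤ, ((1 - γ) / (γ ^ f + γ ^ c)) * γ ^ |(n : ℝ) - μ| * (n : ℝ) ^ 2)
      - (∑' n : ℤ, ((1 - γ) / (γ ^ f + γ ^ c)) * γ ^ |(n : ℝ) - μ| * (n : ℝ)) ^ 2
      = dalapPhi f c γ := by
  set m : ℤ := ⌊μ⌋ with hm
  have hm1 : (m : ℝ) < μ := lt_of_le_of_ne (Int.floor_le μ) (hμ m)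
  have hm2 : μ < m + 1 := by exact_mod_cast Int.lt_floor_add_one μ
  have hr : ‖γ‖ < 1 := by rw [Real.norm_eq_abs, abs_of_pos hγ0]; exact hγ1
  have h1γ : (0:ℝ) < 1 - γ := by linarith
  have h0 : HasSum (fun k : ℕ => γ ^ k) (1 - γ)⁻¹ := hasSum_geometric_of_norm_lt_one hr
  have h1 : HasSum (fun k : ℕ => (k : ℝ) * γ ^ k) (γ / (1 - γ) ^ 2) :=
    hasSum_coe_mul_geometric_of_norm_lt_one hr
  have h2 := hasSum_sq_geom hr
  set M : ℝ := (m : ℝ) with hM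
  set G0 : ℝ := (1 - γ)⁻¹ with hG0
  set G1 : ℝ := γ / (1 - γ) ^ 2 with hG1
  set G2 : ℝ := 2 / (1 - γ) ^ 3 - 3 / (1 - γ) ^ 2 + 1 / (1 - γ) with hG2
  -- nat-indexed sums
  have P1 : HasSum (fun k : ℕ => γ ^ k * (M + 1 + k)) ((M + 1) * G0 + G1) := by
    convert (h0.mul_left (M + 1)).add h1 using 1
    · rfl
    funext k; ring
  have N1 : HasSum (fun k : ℕ => γ ^ k * (M - k)) (M * G0 - G1) := by
    convert (h0.mul_left M).sub h1 using 1
    · rfl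
    funext k; ring
  have P2 : HasSum (fun k : ℕ => γ ^ k * (M + 1 + k) ^ 2)
      ((M + 1) ^ 2 * G0 + 2 * (M + 1) * G1 + G2) := by
    convert ((h0.mul_left ((M + 1) ^ 2)).add (h1.mul_left (2 * (M + 1)))).add h2 using 1
    · rfl
    funext k; ring
  have N2 : HasSum (fun k : ℕ => γ ^ k * (M - k) ^ 2) (M ^ 2 * G0 - 2 * M * G1 + G2) := by
    convert ((h0.mul_left (M ^ 2)).sub (h1.mul_left (2 * M))).add h2 using 1
    · rfl
    funext k; ring
  -- ℤ-indexed sums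
  have hcM : c = M + 1 - μ := by rw [hc]
  have hfM : f = μ - M := by rw [hf]
  have T1 : HasSum (fun n : ℤ => γ ^ |(n : ℝ) - μ| * (n : ℝ))
      (γ ^ c * ((M + 1) * G0 + G1) + γ ^ f * (M * G0 - G1)) := by
    apply hasSum_int_split m hm1 hm2 (fun n => (n : ℝ))
    · rw [hcM]
      convert hasSum_shift hγ0 (M + 1 - μ) P1 using 1
      funext k; push_cast; rw [hM]
    · rw [hfM]
      convert hasSum_shift hγ0 (μ - M) N1 using 1
      funext k; push_cast; rw [hM]
  have T2 : HasSum (fun n : ℤ => γ ^ |(n : ℝ) - μ| * (n : ℝ) ^ 2)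
      (γ ^ c * ((M + 1) ^ 2 * G0 + 2 * (M + 1) * G1 + G2)
        + γ ^ f * (M ^ 2 * G0 - 2 * M * G1 + G2)) := by
    apply hasSum_int_split m hm1 hm2 (fun n => (n : ℝ) ^ 2)
    · rw [hcM]
      convert hasSum_shift hγ0 (M + 1 - μ) P2 using 1
      funext k; push_cast; rw [hM]
    · rw [hfM]
      convert hasSum_shift hγ0 (μ - M) N2 using 1
      funext k; push_cast; rw [hM]
  set C : ℝ := (1 - γ) / (γ ^ f + γ ^ c) with hC
  have e2 : (∑' n : ℤ, C * γ ^ |(n : ℝ) - μ| * (n : ℝ) ^ 2)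
      = C * (γ ^ c * ((M + 1) ^ 2 * G0 + 2 * (M + 1) * G1 + G2)
        + γ ^ f * (M ^ 2 * G0 - 2 * M * G1 + G2)) := by
    rw [show (fun n : ℤ => C * γ ^ |(n : ℝ) - μ| * (n : ℝ) ^ 2)
        = fun n : ℤ => C * (γ ^ |(n : ℝ) - μ| * (n : ℝ) ^ 2) from funext fun n => by ring]
    rw [tsum_mul_left, T2.tsum_eq]
  have e1 : (∑' n : ℤ, C * γ ^ |(n : ℝ) - μ| * (n : ℝ))
      = C * (γ ^ c * ((M + 1) * G0 + G1) + γ ^ f * (M * G0 - G1)) := by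
    rw [show (fun n : ℤ => C * γ ^ |(n : ℝ) - μ| * (n : ℝ))
        = fun n : ℤ => C * (γ ^ |(n : ℝ) - μ| * (n : ℝ)) from funext fun n => by ring]
    rw [tsum_mul_left, T1.tsum_eq]
  rw [e2, e1]
  -- algebra
  simp only [dalapPhi]
  rw [hC, hG0, hG1, hG2]
  set a : ℝ := γ ^ f with ha
  set b : ℝ := γ ^ c with hb
  have ha0 : 0 < a := Real.rpow_pos_of_pos hγ0 f
  have hb0 : 0 < b := Real.rpow_pos_of_pos hγ0 c
  have hab : a * b = γ := by
    rw [ha, hb, ← Real.rpow_add hγ0]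
    have : f + c = 1 := by rw [hf, hc]; ring
    rw [this, Real.rpow_one]
  have habne : a + b ≠ 0 := by positivity
  have h1ne : (1:ℝ) - γ ≠ 0 := ne_of_gt h1γ
  rw [← hab] at h1ne ⊢
  field_simp
  ring

lemma tendsto_rpow_zero' {p : ℝ} (hp : 0 < p) :
    Tendsto (fun γ : ℝ => γ ^ p) (𝓝[>] 0) (𝓝 0) := by
  have h := (Real.continuousAt_rpow_const 0 p (Or.inr hp.le)).tendsto
  rw [Real.zero_rpow hp.ne'] at h
  exact tendsto_nhdsWithin_of_tendsto_nhds h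

lemma tendsto_q_eq {f c : ℝ} (hcf : c = f) :
    Tendsto (fun γ : ℝ => γ ^ c / (γ ^ f + γ ^ c)) (𝓝[>] 0) (𝓝 (1/2)) := by
  apply Tendsto.congr' _ (tendsto_const_nhds (x := (1/2 : ℝ)))
  filter_upwards [self_mem_nhdsWithin] with γ (hγ : 0 < γ)
  have h : (0:ℝ) < γ ^ c := Real.rpow_pos_of_pos hγ c
  rw [hcf]
  field_simp
  norm_num

lemma tendsto_q_lt {f c : ℝ} (hcf : c < f) :
    Tendsto (fun γ : ℝ => γ ^ c / (γ ^ f + γ ^ c)) (𝓝[>] 0) (𝓝 1) := by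
  have hp : 0 < f - c := by linarith
  have hden : Tendsto (fun γ : ℝ => γ ^ (f - c) + 1) (𝓝[>] 0) (𝓝 1) := by
    have := (tendsto_rpow_zero' hp).add (tendsto_const_nhds (x := (1:ℝ)))
    simpa using this
  have T : Tendsto (fun γ : ℝ => (γ ^ (f - c) + 1)⁻¹) (𝓝[>] 0) (𝓝 1) := by
    simpa using hden.inv₀ one_ne_zero
  apply Tendsto.congr' _ T
  filter_upwards [self_mem_nhdsWithin] with γ (hγ : 0 < γ)
  have hc0 : (0:ℝ) < γ ^ c := Real.rpow_pos_of_pos hγ c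
  have hfc : γ ^ f = γ ^ (f - c) * γ ^ c := by
    rw [← Real.rpow_add hγ]; ring_nf
  have hd : (0:ℝ) < γ ^ (f - c) + 1 := by positivity
  rw [hfc]
  field_simp

lemma tendsto_q_gt {f c : ℝ} (hcf : f < c) :
    Tendsto (fun γ : ℝ => γ ^ c / (γ ^ f + γ ^ c)) (𝓝[>] 0) (𝓝 0) := by
  have hp : 0 < c - f := by linarith
  have hden : Tendsto (fun γ : ℝ => 1 + γ ^ (c - f)) (𝓝[>] 0) (𝓝 1) := by
    have := (tendsto_const_nhds (x := (1:ℝ))).add (tendsto_rpow_zero' hp)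
    simpa using this
  have T : Tendsto (fun γ : ℝ => γ ^ (c - f) / (1 + γ ^ (c - f))) (𝓝[>] 0) (𝓝 0) := by
    have := (tendsto_rpow_zero' hp).div hden one_ne_zero
    rw [zero_div] at this
    exact this
  apply Tendsto.congr' _ T
  filter_upwards [self_mem_nhdsWithin] with γ (hγ : 0 < γ)
  have hf0 : (0:ℝ) < γ ^ f := Real.rpow_pos_of_pos hγ f
  have hfc : γ ^ c = γ ^ (c - f) * γ ^ f := by
    rw [← Real.rpow_add hγ]; ring_nf
  have hd : (0:ℝ) < 1 + γ ^ (c - f) := by positivity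
  rw [hfc]
  field_simp

lemma tendsto_dalapPhi {f c : ℝ} (q0 : ℝ)
    (hq : Tendsto (fun γ : ℝ => γ ^ c / (γ ^ f + γ ^ c)) (𝓝[>] 0) (𝓝 q0)) :
    Tendsto (fun γ : ℝ => dalapPhi f c γ) (𝓝[>] 0) (𝓝 (q0 - q0 ^ 2)) := by
  have hA : Tendsto (fun γ : ℝ => γ / (1 - γ)) (𝓝[>] 0) (𝓝 0) := by
    apply tendsto_nhdsWithin_of_tendsto_nhds
    have : ContinuousAt (fun γ : ℝ => γ / (1 - γ)) 0 :=
      continuousAt_id.div (by fun_prop) (by norm_num)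
    simpa using this.tendsto
  have hB : Tendsto (fun γ : ℝ => γ * (1 + γ) / (1 - γ) ^ 2) (𝓝[>] 0) (𝓝 0) := by
    apply tendsto_nhdsWithin_of_tendsto_nhds
    have : ContinuousAt (fun γ : ℝ => γ * (1 + γ) / (1 - γ) ^ 2) 0 :=
      (continuousAt_id.mul (by fun_prop)).div (by fun_prop) (by norm_num)
    simpa using this.tendsto
  have T := (hB.add (hq.mul ((tendsto_const_nhds (x := (1:ℝ))).add (hA.const_mul 2)))).sub
      ((hq.add (((hq.const_mul 2).sub (tendsto_const_nhds (x := (1:ℝ)))).mul hA)).pow 2)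
  have hval : (0 + q0 * (1 + 2 * 0)) - (q0 + (2 * q0 - 1) * 0) ^ 2 = q0 - q0 ^ 2 := by ring
  rw [hval] at T
  exact T

/-- The variance of the Dalap distribution
`p(n) = ((1-γ)/(γ^f+γ^c)) γ^{|n-μ|}` on `ℤ` converges to `0` as `γ → 0⁺`
if `c ≠ f`, and converges to `1/4` if `c = f`, for non-integer `μ`,
`f = μ-⌊μ⌋`, `c = ⌈μ⌉-μ` with `⌈μ⌉ = ⌊μ⌋+1`. -/
theorem dalap_variance_limit (μ : ℝ) (hμ : ∀ m : ℤ, (m : ℝ) ≠ μ)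
    (f c : ℝ) (hf : f = μ - ⌊μ⌋) (hc : c = (⌊μ⌋ : ℝ) + 1 - μ) :
    (c ≠ f → Tendsto
      (fun γ : ℝ =>
        (∑' n : ℤ, ((1 - γ) / (γ ^ f + γ ^ c)) * γ ^ |(n : ℝ) - μ| * (n : ℝ) ^ 2)
        - (∑' n : ℤ, ((1 - γ) / (γ ^ f + γ ^ c)) * γ ^ |(n : ℝ) - μ| * (n : ℝ)) ^ 2)
      (𝓝[>] 0) (𝓝 0)) ∧
    (c = f → Tendsto
      (fun γ : ℝ =>
        (∑' n : ℤ, ((1 - γ) / (γ ^ f + γ ^ c)) * γ ^ |(n : ℝ) - μ| * (n : ℝ) ^ 2)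
        - (∑' n : ℤ, ((1 - γ) / (γ ^ f + γ ^ c)) * γ ^ |(n : ℝ) - μ| * (n : ℝ)) ^ 2)
      (𝓝[>] 0) (𝓝 (1 / 4))) := by
  have hev : (fun γ : ℝ =>
        (∑' n : ℤ, ((1 - γ) / (γ ^ f + γ ^ c)) * γ ^ |(n : ℝ) - μ| * (n : ℝ) ^ 2)
        - (∑' n : ℤ, ((1 - γ) / (γ ^ f + γ ^ c)) * γ ^ |(n : ℝ) - μ| * (n : ℝ)) ^ 2)
      =ᶠ[𝓝[>] (0:ℝ)] (fun γ => dalapPhi f c γ) := by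
    filter_upwards [Ioo_mem_nhdsGT_of_mem (Set.mem_Ico.mpr ⟨le_refl (0:ℝ), one_pos⟩)] with γ hγ
    exact dalap_variance_eq μ hμ f c hf hc γ hγ.1 hγ.2
  constructor
  · intro hne
    rcases lt_or_gt_of_ne hne with h | h
    · have T := tendsto_dalapPhi (f := f) (c := c) 1 (tendsto_q_lt h)
      rw [show (1:ℝ) - 1 ^ 2 = 0 by norm_num] at T
      exact T.congr' hev.symm
    · have T := tendsto_dalapPhi (f := f) (c := c) 0 (tendsto_q_gt h)
      rw [show (0:ℝ) - 0 ^ 2 = 0 by norm_num] at T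
      exact T.congr' hev.symm
  · intro heq
    have T := tendsto_dalapPhi (f := f) (c := c) (1/2) (tendsto_q_eq heq)
    rw [show (1/2 : ℝ) - (1/2) ^ 2 = 1/4 by norm_num] at T
    exact T.congr' hev.symm
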